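/- If a tuple (g_1, ..., g_k) of vectors in ℚ^d represents a partially perfect half space whose denotation {a : a · (g_1,...,g_k) ≺ 0} is disjoint from the nonnegative orthant ℚ_{≥0}^d, then for every c ∈ ℚ^d and all bounds a_ℓ ≤ b_ℓ (ℓ = 1,...,k−1), the set {x · g_k : x ∈ ℚ^d, c + x ≥ 0 componentwise, and a_ℓ ≤ x · g_ℓ ≤ b_ℓ for all ℓ < k} is bounded below. -/

import Mathlib

open Matrix

/-- Farkas lemma over `ℚ`, proved by induction on the number of generators. -/
lemma farkasQ : ∀ (n : ℕ) {d : ℕ} (A : Fin n → Fin d → ℚ) (g : Fin d → ℚ),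
    (∀ y : Fin d → ℚ, (∀ i, 0 ≤ y ⬝ᵥ A i) → 0 ≤ y ⬝ᵥ g) →
    ∃ lam : Fin n → ℚ, (∀ i, 0 ≤ lam i) ∧ g = ∑ i, lam i • A i := by
  intro n
  induction n with
  | zero =>
    intro d A g h
    have h1 : 0 ≤ (-g) ⬝ᵥ g := h (-g) (fun i => i.elim0)
    rw [neg_dotProduct, neg_nonneg] at h1
    have h2 : g ⬝ᵥ g = 0 :=
      le_antisymm h1 (Finset.sum_nonneg fun i _ => mul_self_nonneg (g i))
    rw [dotProduct_self_eq_zero] at h2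
    exact ⟨0, fun i => le_refl 0, by simp [h2]⟩
  | succ n ih =>
    intro d A g h
    by_cases hc : ∀ y : Fin d → ℚ, (∀ i : Fin n, 0 ≤ y ⬝ᵥ A i.castSucc) → 0 ≤ y ⬝ᵥ g
    · obtain ⟨mu, hmu, hg⟩ := ih (fun i => A i.castSucc) g hc
      refine ⟨Fin.snoc mu 0, ?_, ?_⟩
      · intro i
        refine Fin.lastCases ?_ ?_ i
        · simp
        · intro j; simpa using hmu j
      · rw [Fin.sum_univ_castSucc]
        simp only [Fin.snoc_castSucc, Fin.snoc_last, zero_smul, add_zero]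
        exact hg
    · push_neg at hc
      obtain ⟨w, hw, hwg⟩ := hc
      set An := A (Fin.last n) with hAn
      have hwAn : w ⬝ᵥ An < 0 := by
        by_contra hcon
        push_neg at hcon
        have hall : ∀ i : Fin (n + 1), 0 ≤ w ⬝ᵥ A i := by
          intro i
          refine Fin.lastCases ?_ hw i
          exact hcon
        linarith [h w hall]
      set α := w ⬝ᵥ An with hα
      have hαne : α ≠ 0 := ne_of_lt hwAn
      have key : ∀ (y v : Fin d → ℚ),
          y ⬝ᵥ (v - (w ⬝ᵥ v / α) • An)
          = (y - (y ⬝ᵥ An / α) • w) ⬝ᵥ v := by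
        intro y v
        rw [dotProduct_sub, sub_dotProduct, dotProduct_smul, smul_dotProduct,
          smul_eq_mul, smul_eq_mul]
        ring
      have hproj : ∀ y : Fin d → ℚ,
          (∀ i : Fin n, 0 ≤ y ⬝ᵥ (A i.castSucc - (w ⬝ᵥ A i.castSucc / α) • An)) →
          0 ≤ y ⬝ᵥ (g - (w ⬝ᵥ g / α) • An) := by
        intro y hy
        rw [key]
        apply h
        intro i
        refine Fin.lastCases ?_ ?_ i
        · have : (y - (y ⬝ᵥ An / α) • w) ⬝ᵥ An = 0 := by
            rw [sub_dotProduct, smul_dotProduct, smul_eq_mul, ← hα]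
            field_simp
            ring
          rw [← hAn, this]
        · intro j
          rw [← key]
          exact hy j
      obtain ⟨mu, hmu, hgeq⟩ := ih _ _ hproj
      set S := ∑ i, mu i * (w ⬝ᵥ A i.castSucc / α) with hS
      have expand : ∀ i ∈ Finset.univ, mu i • (A i.castSucc - (w ⬝ᵥ A i.castSucc / α) • An)
          = mu i • A i.castSucc - (mu i * (w ⬝ᵥ A i.castSucc / α)) • An := by
        intro i _
        rw [smul_sub, smul_smul]
      rw [Finset.sum_congr rfl expand, Finset.sum_sub_distrib, ← Finset.sum_smul, ← hS] at hgeq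
      have hX : (∑ i, mu i • A i.castSucc)
          = g - (w ⬝ᵥ g / α) • An + S • An := by
        rw [hgeq]; abel
      have hk : 0 < w ⬝ᵥ g / α := div_pos_of_neg_of_neg hwg hwAn
      have hSle : S ≤ 0 := by
        apply Finset.sum_nonpos
        intro i _
        have h1 : w ⬝ᵥ A i.castSucc / α ≤ 0 :=
          div_nonpos_of_nonneg_of_nonpos (hw i) (le_of_lt hwAn)
        exact mul_nonpos_of_nonneg_of_nonpos (hmu i) h1
      refine ⟨Fin.snoc mu (w ⬝ᵥ g / α - S), ?_, ?_⟩
      · intro i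
        refine Fin.lastCases ?_ ?_ i
        · rw [Fin.snoc_last]; linarith
        · intro j; simpa using hmu j
      · rw [Fin.sum_univ_castSucc]
        simp only [Fin.snoc_castSucc, Fin.snoc_last]
        rw [hX, sub_smul]
        abel

/-- LP boundedness from the recession-cone condition. -/
lemma bddQ {ι : Type} [Fintype ι] {d : ℕ} (A : ι → Fin d → ℚ) (b : ι → ℚ) (g : Fin d → ℚ)
    (hyp : ∀ y : Fin d → ℚ, (∀ i, 0 ≤ y ⬝ᵥ A i) → 0 ≤ y ⬝ᵥ g) :
    ∃ L : ℚ, ∀ x : Fin d → ℚ, (∀ i, b i ≤ x ⬝ᵥ A i) → L ≤ x ⬝ᵥ g := by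
  classical
  let e := (Fintype.truncEquivFin ι).out
  obtain ⟨lam, hlam, hg⟩ := farkasQ (Fintype.card ι) (fun i => A (e.symm i)) g
    (fun y hy => hyp y (fun i => by simpa using hy (e i)))
  refine ⟨∑ i, lam i * b (e.symm i), ?_⟩
  intro x hx
  have : x ⬝ᵥ g = ∑ i, lam i * (x ⬝ᵥ A (e.symm i)) := by
    rw [hg]
    simp only [dotProduct, Finset.sum_apply, Pi.smul_apply, smul_eq_mul, Finset.mul_sum]
    rw [Finset.sum_comm]
    exact Finset.sum_congr rfl fun i _ => Finset.sum_congr rfl fun j _ => by ring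
  rw [this]
  apply Finset.sum_le_sum
  intro i _
  exact mul_le_mul_of_nonneg_left (hx (e.symm i)) (hlam i)

lemma lex_append_singleton {x y : ℚ} (t : List ℚ) (h : x < y) :
    List.Lex (· < ·) (t ++ [x]) (t ++ [y]) := by
  induction t with
  | nil => exact List.Lex.rel h
  | cons a t ih => exact List.Lex.cons ih

/-- If the denotation of a partially perfect half space `(g_1, ..., g_k)` is disjoint
from the nonnegative orthant, then for every `c` and bounds `a_l ≤ b_l` the set
`{x · g_k : c + x ≥ 0, a_l ≤ x · g_l ≤ b_l for l < k}` is bounded below. -/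
theorem stmt10 (d m : ℕ) (G : Fin (m + 1) → Fin d → ℚ)
    (hdisj : Disjoint
      {a : Fin d → ℚ |
        List.Lex (· < ·) (List.ofFn fun j => a ⬝ᵥ G j) (List.replicate (m + 1) (0 : ℚ))}
      {a : Fin d → ℚ | ∀ i, 0 ≤ a i}) :
    ∀ (c : Fin d → ℚ) (a b : Fin m → ℚ), (∀ l, a l ≤ b l) →
      ∃ L : ℚ, ∀ x : Fin d → ℚ, (∀ i, 0 ≤ c i + x i) →
        (∀ l : Fin m, a l ≤ x ⬝ᵥ G l.castSucc ∧ x ⬝ᵥ G l.castSucc ≤ b l) →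
        L ≤ x ⬝ᵥ G (Fin.last m) := by
  intro c a b _hab
  -- build the constraint system
  set A : (Fin d ⊕ (Fin m ⊕ Fin m)) → Fin d → ℚ :=
    Sum.elim (fun i => Pi.single i 1)
      (Sum.elim (fun l => G l.castSucc) (fun l => -(G l.castSucc))) with hAdef
  set bb : (Fin d ⊕ (Fin m ⊕ Fin m)) → ℚ :=
    Sum.elim (fun i => -(c i)) (Sum.elim a (fun l => -(b l))) with hbbdef
  have hyp : ∀ y : Fin d → ℚ, (∀ i, 0 ≤ y ⬝ᵥ A i) → 0 ≤ y ⬝ᵥ G (Fin.last m) := by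
    intro y hy
    by_contra hneg
    push_neg at hneg
    have hynn : ∀ i, 0 ≤ y i := by
      intro i
      have := hy (Sum.inl i)
      simpa [A, dotProduct_single] using this
    have hzero : ∀ l : Fin m, y ⬝ᵥ G l.castSucc = 0 := by
      intro l
      have h1 := hy (Sum.inr (Sum.inl l))
      have h2 := hy (Sum.inr (Sum.inr l))
      simp only [A, Sum.elim_inr, Sum.elim_inl, dotProduct_neg] at h1 h2
      linarith
    have hmem : y ∈ {a : Fin d → ℚ |
        List.Lex (· < ·) (List.ofFn fun j => a ⬝ᵥ G j) (List.replicate (m + 1) (0 : ℚ))} := by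
      show List.Lex (· < ·) (List.ofFn fun j => y ⬝ᵥ G j) (List.replicate (m + 1) (0 : ℚ))
      rw [List.ofFn_succ' (fun j => y ⬝ᵥ G j)]
      have hrep : List.replicate (m + 1) (0 : ℚ)
          = (List.ofFn fun _ : Fin m => (0 : ℚ)).concat 0 := by
        simp [List.concat_eq_append, List.ofFn_const, List.replicate_succ']
      rw [hrep]
      have hfst : (List.ofFn fun j : Fin m => y ⬝ᵥ G j.castSucc)
          = List.ofFn fun _ : Fin m => (0 : ℚ) := by
        congr 1
        funext j
        exact hzero j
      rw [List.concat_eq_append, List.concat_eq_append, hfst]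
      exact lex_append_singleton _ hneg
    exact Set.disjoint_left.mp hdisj hmem hynn
  obtain ⟨L, hL⟩ := bddQ A bb (G (Fin.last m)) hyp
  refine ⟨L, ?_⟩
  intro x hx hlx
  apply hL
  intro i
  match i with
  | Sum.inl i =>
    have := hx i
    simp only [A, bb, Sum.elim_inl, dotProduct_single, mul_one]
    linarith
  | Sum.inr (Sum.inl l) =>
    simpa [A, bb] using (hlx l).1
  | Sum.inr (Sum.inr l) =>
    have := (hlx l).2
    simp only [A, bb, Sum.elim_inr, dotProduct_neg]
    linarith
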